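/- Let g : ℍ → ℍ be real-(Fréchet-)differentiable at q ∈ ℍ, let f : ℍ → ℍ be real-(Fréchet-)differentiable at g(q), and let μ, ν ∈ ℍ be nonzero. Then the composite f ∘ g is real-differentiable at q and its left GHR derivative satisfies the chain rule ∂(f∘g)/∂q^μ(q) = Σ_{η ∈ {1,i,j,k}} (∂f/∂p^{νη})(g(q)) · ∂(g^{νη})/∂q^μ(q), where g^{νη} denotes the function p ↦ (νη) g(p) (νη)⁻¹ and (∂f/∂p^{νη})(g(q)) is the left GHR derivative of f at the point g(q) with respect to the nonzero quaternion νη. The analogous identity holds for ∂(f∘g)/∂q^{μ*}(q) with each ∂(g^{νη})/∂q^μ replaced by ∂(g^{νη})/∂q^{μ*}. -/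

import Mathlib

open Quaternion Filter Topology Asymptotics

noncomputable section

/-- The imaginary unit `i` of the real quaternions. -/
def qI : ℍ[ℝ] := ⟨0, 1, 0, 0⟩
/-- The imaginary unit `j` of the real quaternions. -/
def qJ : ℍ[ℝ] := ⟨0, 0, 1, 0⟩
/-- The imaginary unit `k` of the real quaternions. -/
def qK : ℍ[ℝ] := ⟨0, 0, 0, 1⟩

/-- Quaternion rotation `p ↦ μ p μ⁻¹`. -/
def qRot (μ p : ℍ[ℝ]) : ℍ[ℝ] := μ * p * μ⁻¹

/-- The left GHR derivative `∂f/∂q^μ` at `q`. -/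
def lD (f : ℍ[ℝ] → ℍ[ℝ]) (μ q : ℍ[ℝ]) : ℍ[ℝ] :=
  (4 : ℍ[ℝ])⁻¹ * (fderiv ℝ f q 1 - fderiv ℝ f q qI * qRot μ qI
    - fderiv ℝ f q qJ * qRot μ qJ - fderiv ℝ f q qK * qRot μ qK)

/-- The left conjugate GHR derivative `∂f/∂q^{μ*}` at `q`. -/
def lDc (f : ℍ[ℝ] → ℍ[ℝ]) (μ q : ℍ[ℝ]) : ℍ[ℝ] :=
  (4 : ℍ[ℝ])⁻¹ * (fderiv ℝ f q 1 + fderiv ℝ f q qI * qRot μ qI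
    + fderiv ℝ f q qJ * qRot μ qJ + fderiv ℝ f q qK * qRot μ qK)

/-- The right GHR derivative `∂ᵣf/∂q^μ` at `q`. -/
def rD (f : ℍ[ℝ] → ℍ[ℝ]) (μ q : ℍ[ℝ]) : ℍ[ℝ] :=
  (4 : ℍ[ℝ])⁻¹ * (fderiv ℝ f q 1 - qRot μ qI * fderiv ℝ f q qI
    - qRot μ qJ * fderiv ℝ f q qJ - qRot μ qK * fderiv ℝ f q qK)

/-- The right conjugate GHR derivative `∂ᵣf/∂q^{μ*}` at `q`. -/
def rDc (f : ℍ[ℝ] → ℍ[ℝ]) (μ q : ℍ[ℝ]) : ℍ[ℝ] :=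
  (4 : ℍ[ℝ])⁻¹ * (fderiv ℝ f q 1 + qRot μ qI * fderiv ℝ f q qI
    + qRot μ qJ * fderiv ℝ f q qJ + qRot μ qK * fderiv ℝ f q qK)


@[simp] lemma qI_re : qI.re = 0 := rfl
@[simp] lemma qI_imI : qI.imI = 1 := rfl
@[simp] lemma qI_imJ : qI.imJ = 0 := rfl
@[simp] lemma qI_imK : qI.imK = 0 := rfl
@[simp] lemma qJ_re : qJ.re = 0 := rfl
@[simp] lemma qJ_imI : qJ.imI = 0 := rfl
@[simp] lemma qJ_imJ : qJ.imJ = 1 := rfl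
@[simp] lemma qJ_imK : qJ.imK = 0 := rfl
@[simp] lemma qK_re : qK.re = 0 := rfl
@[simp] lemma qK_imI : qK.imI = 0 := rfl
@[simp] lemma qK_imJ : qK.imJ = 0 := rfl
@[simp] lemma qK_imK : qK.imK = 1 := rfl

lemma qI_ne : qI ≠ 0 := by simp [Quaternion.ext_iff]
lemma qJ_ne : qJ ≠ 0 := by simp [Quaternion.ext_iff]
lemma qK_ne : qK ≠ 0 := by simp [Quaternion.ext_iff]

lemma qI_inv : qI⁻¹ = -qI := by
  rw [inv_eq_of_mul_eq_one_right]
  ext <;> simp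
lemma qJ_inv : qJ⁻¹ = -qJ := by
  rw [inv_eq_of_mul_eq_one_right]
  ext <;> simp
lemma qK_inv : qK⁻¹ = -qK := by
  rw [inv_eq_of_mul_eq_one_right]
  ext <;> simp

lemma avg (y : ℍ[ℝ]) :
    qRot 1 y + qRot qI y + qRot qJ y + qRot qK y = ((4 * y.re : ℝ) : ℍ[ℝ]) := by
  simp only [qRot, qI_inv, qJ_inv, qK_inv, inv_one]
  ext <;> simp <;> ring

lemma four_inv_smul (z : ℍ[ℝ]) : (4 : ℍ[ℝ])⁻¹ * z = ((4:ℝ)⁻¹) • z := by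
  have h4 : (4 : ℍ[ℝ]) = ((4:ℝ) : ℍ[ℝ]) := by norm_cast
  rw [h4, ← Quaternion.coe_inv, Quaternion.coe_mul_eq_smul]

lemma rot_mul {c : ℍ[ℝ]} (hc : c ≠ 0) (x y : ℍ[ℝ]) :
    qRot c x * qRot c y = qRot c (x * y) := by
  simp [qRot, mul_assoc, inv_mul_cancel_left₀ hc]

lemma rot_comp (ν η x : ℍ[ℝ]) : qRot (ν * η) x = qRot ν (qRot η x) := by
  simp [qRot, mul_inv_rev, mul_assoc]

lemma avg' {ν : ℍ[ℝ]} (hν : ν ≠ 0) (y : ℍ[ℝ]) :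
    qRot (ν * 1) y + qRot (ν * qI) y + qRot (ν * qJ) y + qRot (ν * qK) y
      = ((4 * y.re : ℝ) : ℍ[ℝ]) := by
  rw [rot_comp, rot_comp, rot_comp, rot_comp]
  have h : qRot ν (qRot 1 y) + qRot ν (qRot qI y) + qRot ν (qRot qJ y) + qRot ν (qRot qK y)
      = qRot ν (qRot 1 y + qRot qI y + qRot qJ y + qRot qK y) := by
    simp [qRot, mul_add, add_mul]
  rw [h, avg, qRot, ← Quaternion.coe_commutes, mul_assoc, mul_inv_cancel₀ hν, mul_one]

lemma decomp (x : ℍ[ℝ]) :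
    x.re • (1 : ℍ[ℝ]) + x.imI • qI + x.imJ • qJ + x.imK • qK = x := by
  ext <;> simp

lemma key (a1 aI aJ aK : ℍ[ℝ]) {ν : ℍ[ℝ]} (hν : ν ≠ 0) (x : ℍ[ℝ]) :
    ((4:ℍ[ℝ])⁻¹ * (a1 - aI * qRot (ν*1) qI - aJ * qRot (ν*1) qJ - aK * qRot (ν*1) qK)) * qRot (ν*1) x
    + ((4:ℍ[ℝ])⁻¹ * (a1 - aI * qRot (ν*qI) qI - aJ * qRot (ν*qI) qJ - aK * qRot (ν*qI) qK)) * qRot (ν*qI) x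
    + ((4:ℍ[ℝ])⁻¹ * (a1 - aI * qRot (ν*qJ) qI - aJ * qRot (ν*qJ) qJ - aK * qRot (ν*qJ) qK)) * qRot (ν*qJ) x
    + ((4:ℍ[ℝ])⁻¹ * (a1 - aI * qRot (ν*qK) qI - aJ * qRot (ν*qK) qJ - aK * qRot (ν*qK) qK)) * qRot (ν*qK) x
      = x.re • a1 + x.imI • aI + x.imJ • aJ + x.imK • aK := by
  have h1 : ν * 1 ≠ 0 := by simpa using hν
  have h2 : ν * qI ≠ 0 := mul_ne_zero hν qI_ne
  have h3 : ν * qJ ≠ 0 := mul_ne_zero hν qJ_ne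
  have h4 : ν * qK ≠ 0 := mul_ne_zero hν qK_ne
  have step : ∀ c : ℍ[ℝ], c ≠ 0 →
      ((4:ℍ[ℝ])⁻¹ * (a1 - aI * qRot c qI - aJ * qRot c qJ - aK * qRot c qK)) * qRot c x
      = (4:ℝ)⁻¹ • (a1 * qRot c x - aI * qRot c (qI*x) - aJ * qRot c (qJ*x)
          - aK * qRot c (qK*x)) := by
    intro c hc
    rw [four_inv_smul, smul_mul_assoc]
    congr 1
    rw [sub_mul, sub_mul, sub_mul, mul_assoc aI, mul_assoc aJ, mul_assoc aK,
      rot_mul hc, rot_mul hc, rot_mul hc]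
  rw [step _ h1, step _ h2, step _ h3, step _ h4, ← smul_add, ← smul_add, ← smul_add]
  have hbig : (a1 * qRot (ν*1) x - aI * qRot (ν*1) (qI*x) - aJ * qRot (ν*1) (qJ*x) - aK * qRot (ν*1) (qK*x))
      + (a1 * qRot (ν*qI) x - aI * qRot (ν*qI) (qI*x) - aJ * qRot (ν*qI) (qJ*x) - aK * qRot (ν*qI) (qK*x))
      + (a1 * qRot (ν*qJ) x - aI * qRot (ν*qJ) (qI*x) - aJ * qRot (ν*qJ) (qJ*x) - aK * qRot (ν*qJ) (qK*x))
      + (a1 * qRot (ν*qK) x - aI * qRot (ν*qK) (qI*x) - aJ * qRot (ν*qK) (qJ*x) - aK * qRot (ν*qK) (qK*x))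
      = a1 * (qRot (ν*1) x + qRot (ν*qI) x + qRot (ν*qJ) x + qRot (ν*qK) x)
        - aI * (qRot (ν*1) (qI*x) + qRot (ν*qI) (qI*x) + qRot (ν*qJ) (qI*x) + qRot (ν*qK) (qI*x))
        - aJ * (qRot (ν*1) (qJ*x) + qRot (ν*qI) (qJ*x) + qRot (ν*qJ) (qJ*x) + qRot (ν*qK) (qJ*x))
        - aK * (qRot (ν*1) (qK*x) + qRot (ν*qI) (qK*x) + qRot (ν*qJ) (qK*x) + qRot (ν*qK) (qK*x)) := by
    noncomm_ring
  rw [hbig, avg' hν x, avg' hν (qI*x), avg' hν (qJ*x), avg' hν (qK*x)]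
  have hreI : (qI*x).re = -x.imI := by simp [Quaternion.re_mul]
  have hreJ : (qJ*x).re = -x.imJ := by simp [Quaternion.re_mul]
  have hreK : (qK*x).re = -x.imK := by simp [Quaternion.re_mul]
  rw [hreI, hreJ, hreK]
  simp only [Quaternion.mul_coe_eq_smul]
  match_scalars <;> ring

lemma assemble (P1 P2 P3 P4 RI RJ RK a1 aI aJ aK
    m11 m1I m1J m1K m21 m2I m2J m2K m31 m3I m3J m3K m41 m4I m4J m4K : ℍ[ℝ])
    (k1 : P1*m11 + P2*m21 + P3*m31 + P4*m41 = a1)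
    (kI : P1*m1I + P2*m2I + P3*m3I + P4*m4I = aI)
    (kJ : P1*m1J + P2*m2J + P3*m3J + P4*m4J = aJ)
    (kK : P1*m1K + P2*m2K + P3*m3K + P4*m4K = aK) :
    (4:ℍ[ℝ])⁻¹ * (a1 - aI*RI - aJ*RJ - aK*RK)
      = P1 * ((4:ℍ[ℝ])⁻¹ * (m11 - m1I*RI - m1J*RJ - m1K*RK))
      + P2 * ((4:ℍ[ℝ])⁻¹ * (m21 - m2I*RI - m2J*RJ - m2K*RK))
      + P3 * ((4:ℍ[ℝ])⁻¹ * (m31 - m3I*RI - m3J*RJ - m3K*RK))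
      + P4 * ((4:ℍ[ℝ])⁻¹ * (m41 - m4I*RI - m4J*RJ - m4K*RK)) := by
  subst k1 kI kJ kK
  simp only [four_inv_smul, mul_smul_comm]
  rw [← smul_add, ← smul_add, ← smul_add]
  congr 1
  noncomm_ring

lemma assemble' (P1 P2 P3 P4 RI RJ RK a1 aI aJ aK
    m11 m1I m1J m1K m21 m2I m2J m2K m31 m3I m3J m3K m41 m4I m4J m4K : ℍ[ℝ])
    (k1 : P1*m11 + P2*m21 + P3*m31 + P4*m41 = a1)
    (kI : P1*m1I + P2*m2I + P3*m3I + P4*m4I = aI)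
    (kJ : P1*m1J + P2*m2J + P3*m3J + P4*m4J = aJ)
    (kK : P1*m1K + P2*m2K + P3*m3K + P4*m4K = aK) :
    (4:ℍ[ℝ])⁻¹ * (a1 + aI*RI + aJ*RJ + aK*RK)
      = P1 * ((4:ℍ[ℝ])⁻¹ * (m11 + m1I*RI + m1J*RJ + m1K*RK))
      + P2 * ((4:ℍ[ℝ])⁻¹ * (m21 + m2I*RI + m2J*RJ + m2K*RK))
      + P3 * ((4:ℍ[ℝ])⁻¹ * (m31 + m3I*RI + m3J*RJ + m3K*RK))
      + P4 * ((4:ℍ[ℝ])⁻¹ * (m41 + m4I*RI + m4J*RJ + m4K*RK)) := by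
  subst k1 kI kJ kK
  simp only [four_inv_smul, mul_smul_comm]
  rw [← smul_add, ← smul_add, ← smul_add]
  congr 1
  noncomm_ring

set_option maxHeartbeats 2000000 in
theorem left_GHR_chain_rule
    (f g : ℍ[ℝ] → ℍ[ℝ]) (q μ ν : ℍ[ℝ])
    (hg : DifferentiableAt ℝ g q) (hf : DifferentiableAt ℝ f (g q))
    (hμ : μ ≠ 0) (hν : ν ≠ 0) :
    DifferentiableAt ℝ (f ∘ g) q ∧
    lD (f ∘ g) μ q
      = lD f (ν * 1) (g q) * lD (fun p => qRot (ν * 1) (g p)) μ q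
        + lD f (ν * qI) (g q) * lD (fun p => qRot (ν * qI) (g p)) μ q
        + lD f (ν * qJ) (g q) * lD (fun p => qRot (ν * qJ) (g p)) μ q
        + lD f (ν * qK) (g q) * lD (fun p => qRot (ν * qK) (g p)) μ q ∧
    lDc (f ∘ g) μ q
      = lD f (ν * 1) (g q) * lDc (fun p => qRot (ν * 1) (g p)) μ q
        + lD f (ν * qI) (g q) * lDc (fun p => qRot (ν * qI) (g p)) μ q
        + lD f (ν * qJ) (g q) * lDc (fun p => qRot (ν * qJ) (g p)) μ q
        + lD f (ν * qK) (g q) * lDc (fun p => qRot (ν * qK) (g p)) μ q := by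
  have hcomp : DifferentiableAt ℝ (f ∘ g) q := hf.comp q hg
  set A := fderiv ℝ f (g q) with hA
  set B := fderiv ℝ g q with hB
  have hAB : fderiv ℝ (f ∘ g) q = A.comp B := fderiv_comp q hf hg
  have hrot : ∀ c : ℍ[ℝ], fderiv ℝ (fun p => qRot c (g p)) q
      = ((c • B).smulRight c⁻¹) := fun c =>
    (((hg.hasFDerivAt.const_mul c).mul_const' c⁻¹).fderiv)
  have hAx : ∀ x : ℍ[ℝ], x.re • A 1 + x.imI • A qI + x.imJ • A qJ + x.imK • A qK = A x := by
    intro x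
    conv_rhs => rw [← decomp x]
    simp [map_add, map_smul]
  have k1 := key (A 1) (A qI) (A qJ) (A qK) hν (B 1)
  have kI := key (A 1) (A qI) (A qJ) (A qK) hν (B qI)
  have kJ := key (A 1) (A qI) (A qJ) (A qK) hν (B qJ)
  have kK := key (A 1) (A qI) (A qJ) (A qK) hν (B qK)
  rw [hAx] at k1 kI kJ kK
  have qr : ∀ c x : ℍ[ℝ], c * x * c⁻¹ = qRot c x := fun _ _ => rfl
  refine ⟨hcomp, ?_, ?_⟩
  · simp only [lD, hAB, hrot, ContinuousLinearMap.coe_comp', Function.comp_apply,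
      ContinuousLinearMap.smulRight_apply, ContinuousLinearMap.coe_smul',
      Pi.smul_apply, smul_eq_mul, qr, ← hA]
    exact assemble _ _ _ _ _ _ _ _ _ _ _ _ _ _ _ _ _ _ _ _ _ _ _ _ _ _ _ k1 kI kJ kK
  · simp only [lD, lDc, hAB, hrot, ContinuousLinearMap.coe_comp', Function.comp_apply,
      ContinuousLinearMap.smulRight_apply, ContinuousLinearMap.coe_smul',
      Pi.smul_apply, smul_eq_mul, qr, ← hA]
    exact assemble' _ _ _ _ _ _ _ _ _ _ _ _ _ _ _ _ _ _ _ _ _ _ _ _ _ _ _ k1 kI kJ kK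


end
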